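/- Let Ω̂ be a real symmetric positive semidefinite n×n matrix with rank(Ω̂) = r < n, let V be an n×(n−r) real matrix with orthonormal columns whose range equals the kernel of Ω̂, and let E be the linear operator from the space of real symmetric (n−r)×(n−r) matrices to the space of diagonal n×n matrices defined by E(X) := diag(V X Vᵀ) (the diagonal part of V X Vᵀ). Assume E is surjective, let E† := E∘(E E∘)⁻¹ be its Moore–Penrose pseudoinverse (where E∘ denotes the adjoint of E), and set φ(Ω̂) := inf over nonzero Δ ∈ D_+^n of ‖Δ‖_F / ‖E†(Δ)‖, where ‖E†(Δ)‖ is the operator norm of the symmetric matrix E†(Δ). Then every Δ ∈ D_+^n with ‖Δ‖_F < φ(Ω̂)·σ_r(Ω̂) belongs to D_Ω̂: there exists Λ ∈ S_0^n with ‖Δ + Λ‖ < σ_r(Ω̂) and range(Δ + Λ) orthogonal to range(Ω̂). -/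

import Mathlib

open Matrix

/-- The `k`-th largest singular value (1-indexed) of a real square matrix,
with junk value `0` when `k` is out of range. -/
noncomputable def sv {n : ℕ} (A : Matrix (Fin n) (Fin n) ℝ) (k : ℕ) : ℝ :=
  if h : k - 1 < n then
    (fun i => Real.sqrt ((Matrix.isHermitian_conjTranspose_mul_self A).eigenvalues i))
      (Tuple.sort (fun i : Fin n =>
        Real.sqrt ((Matrix.isHermitian_conjTranspose_mul_self A).eigenvalues i))
        (Fin.rev ⟨k - 1, h⟩))
  else 0

/-- Operator (spectral) norm: the largest singular value. -/
noncomputable def opNorm {n : ℕ} (A : Matrix (Fin n) (Fin n) ℝ) : ℝ := sv A 1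

/-- Frobenius norm. -/
noncomputable def frobNorm {n : ℕ} (A : Matrix (Fin n) (Fin n) ℝ) : ℝ :=
  Real.sqrt (∑ i, ∑ j, (A i j) ^ 2)

/-- The `r`-norm: square root of the sum of squares of the `r` largest singular values. -/
noncomputable def rNorm {n : ℕ} (A : Matrix (Fin n) (Fin n) ℝ) (r : ℕ) : ℝ :=
  Real.sqrt (∑ k ∈ Finset.range r, (sv A (k + 1)) ^ 2)

/-- Frobenius (trace) inner product of square matrices. -/
noncomputable def minner {n : ℕ} (A B : Matrix (Fin n) (Fin n) ℝ) : ℝ :=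
  (Aᵀ * B).trace

/-- The ranges (column spaces) of `A` and `B` are orthogonal. -/
def rangesOrth {n : ℕ} (A B : Matrix (Fin n) (Fin n) ℝ) : Prop :=
  ∀ x y : Fin n → ℝ, (A.mulVec x) ⬝ᵥ (B.mulVec y) = 0

lemma sv_nonneg' {m : ℕ} (A : Matrix (Fin m) (Fin m) ℝ) (k : ℕ) : 0 ≤ sv A k := by
  unfold sv; split
  · exact Real.sqrt_nonneg _
  · exact le_rfl

-- key identity
lemma dot_mul_self {m k : ℕ} (A : Matrix (Fin m) (Fin k) ℝ) (x : Fin k → ℝ) :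
    (A *ᵥ x) ⬝ᵥ (A *ᵥ x) = x ⬝ᵥ ((Aᵀ * A) *ᵥ x) := by
  rw [← mulVec_mulVec, dotProduct_mulVec, ← mulVec_transpose, dotProduct_comm]

lemma eig_nonneg {m : ℕ} (A : Matrix (Fin m) (Fin m) ℝ) (i : Fin m) :
    0 ≤ (Matrix.isHermitian_conjTranspose_mul_self A).eigenvalues i := by
  have h : (Aᵀ * A).PosSemidef := by
    have := Matrix.posSemidef_conjTranspose_mul_self A
    simpa using this
  exact h.eigenvalues_nonneg i

lemma sv_one_def' {m : ℕ} (hm : 0 < m) (A : Matrix (Fin m) (Fin m) ℝ) :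
    sv A 1 = Real.sqrt ((Matrix.isHermitian_conjTranspose_mul_self A).eigenvalues
      (Tuple.sort (fun i : Fin m =>
        Real.sqrt ((Matrix.isHermitian_conjTranspose_mul_self A).eigenvalues i))
        (Fin.rev ⟨0, hm⟩))) := by
  unfold sv; rw [dif_pos]

lemma eig_le_sv_one' {m : ℕ} (hm : 0 < m) (A : Matrix (Fin m) (Fin m) ℝ) (i : Fin m) :
    Real.sqrt ((Matrix.isHermitian_conjTranspose_mul_self A).eigenvalues i) ≤ sv A 1 := by
  set f : Fin m → ℝ := fun i =>
    Real.sqrt ((Matrix.isHermitian_conjTranspose_mul_self A).eigenvalues i) with hf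
  rw [sv_one_def' hm]
  have hmono := Tuple.monotone_sort f
  have hle : (Tuple.sort f).symm i ≤ Fin.rev ⟨0, hm⟩ := by
    rw [Fin.le_def, Fin.rev]
    simp only [Nat.sub_zero]
    exact Nat.le_sub_one_of_lt ((Tuple.sort f).symm i).isLt
  have := hmono hle
  simp only [Function.comp, Equiv.apply_symm_apply] at this
  exact this

lemma R1 {m : ℕ} (hm : 0 < m) (A : Matrix (Fin m) (Fin m) ℝ) (x : Fin m → ℝ) :
    (A *ᵥ x) ⬝ᵥ (A *ᵥ x) ≤ (sv A 1) ^ 2 * (x ⬝ᵥ x) := by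
  classical
  set hB := Matrix.isHermitian_conjTranspose_mul_self A with hBdef
  set U : Matrix (Fin m) (Fin m) ℝ := (hB.eigenvectorUnitary : Matrix (Fin m) (Fin m) ℝ) with hU
  have hUU : U * Uᵀ = 1 := by
    have h := (Matrix.mem_unitaryGroup_iff).mp hB.eigenvectorUnitary.2
    simp [Matrix.star_eq_conjTranspose, Matrix.conjTranspose_eq_transpose_of_trivial] at h
    exact h
  have hspec : Aᵀ * A = U * Matrix.diagonal hB.eigenvalues * Uᵀ := by
    have h := hB.spectral_theorem
    simp [Matrix.star_eq_conjTranspose, Matrix.conjTranspose_eq_transpose_of_trivial,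
      Function.comp] at h
    exact h
  set y := Uᵀ *ᵥ x with hy
  have hyy : y ⬝ᵥ y = x ⬝ᵥ x := by
    rw [hy, dotProduct_mulVec, ← mulVec_transpose, transpose_transpose, mulVec_mulVec, hUU, one_mulVec,
      dotProduct_comm]
  have hmain : x ⬝ᵥ ((Aᵀ * A) *ᵥ x) = ∑ i, hB.eigenvalues i * (y i) ^ 2 := by
    rw [hspec, ← mulVec_mulVec, ← mulVec_mulVec, dotProduct_mulVec, ← mulVec_transpose, ← hy]
    simp [dotProduct, mulVec_diagonal]
    apply Finset.sum_congr rfl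
    intro i _
    ring
  rw [dot_mul_self, hmain, ← hyy]
  have : ∑ i, hB.eigenvalues i * (y i) ^ 2 ≤ ∑ i, (sv A 1) ^ 2 * (y i) ^ 2 := by
    apply Finset.sum_le_sum
    intro i _
    apply mul_le_mul_of_nonneg_right _ (sq_nonneg _)
    have h1 : Real.sqrt (hB.eigenvalues i) ≤ sv A 1 := eig_le_sv_one' hm A i
    have h2 : hB.eigenvalues i = (Real.sqrt (hB.eigenvalues i)) ^ 2 :=
      (Real.sq_sqrt (eig_nonneg A i)).symm
    rw [h2]
    exact pow_le_pow_left₀ (Real.sqrt_nonneg _) h1 2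
  refine this.trans_eq ?_
  rw [← Finset.mul_sum]
  congr 1
  simp only [dotProduct]
  apply Finset.sum_congr rfl; intro i _; ring

lemma R2 {m : ℕ} (hm : 0 < m) (A : Matrix (Fin m) (Fin m) ℝ) (c : ℝ) (hc : 0 ≤ c)
    (h : ∀ x : Fin m → ℝ, (A *ᵥ x) ⬝ᵥ (A *ᵥ x) ≤ c ^ 2 * (x ⬝ᵥ x)) : sv A 1 ≤ c := by
  classical
  set hB := Matrix.isHermitian_conjTranspose_mul_self A with hBdef
  set i : Fin m := Tuple.sort (fun i : Fin m => Real.sqrt (hB.eigenvalues i)) (Fin.rev ⟨0, hm⟩)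
    with hi
  set v : Fin m → ℝ := ⇑(hB.eigenvectorBasis i) with hv
  have hev : (Aᵀ * A) *ᵥ v = hB.eigenvalues i • v := hB.mulVec_eigenvectorBasis i
  have hvne : v ≠ 0 := by
    have := hB.eigenvectorBasis.orthonormal.ne_zero i
    intro hcon
    apply this
    ext j
    exact congrFun hcon j
  have hvv : 0 < v ⬝ᵥ v := by
    rcases lt_or_eq_of_le (Finset.sum_nonneg fun j _ => mul_self_nonneg (v j)) with h' | h'
    · exact h'
    · exact absurd (dotProduct_self_eq_zero.mp h'.symm) hvne
  have h1 : (A *ᵥ v) ⬝ᵥ (A *ᵥ v) = hB.eigenvalues i * (v ⬝ᵥ v) := by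
    rw [dot_mul_self, hev, dotProduct_smul, smul_eq_mul]
  have h2 : hB.eigenvalues i ≤ c ^ 2 := by
    have := h v
    rw [h1] at this
    exact le_of_mul_le_mul_right this hvv
  rw [sv_one_def' hm]
  calc Real.sqrt (hB.eigenvalues i) ≤ Real.sqrt (c ^ 2) := Real.sqrt_le_sqrt h2
  _ = c := Real.sqrt_sq hc

lemma iso_dot {n m : ℕ} (V : Matrix (Fin n) (Fin m) ℝ) (hV : Vᵀ * V = 1) (z : Fin m → ℝ) :
    (V *ᵥ z) ⬝ᵥ (V *ᵥ z) = z ⬝ᵥ z := by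
  rw [dotProduct_mulVec, ← mulVec_transpose, mulVec_mulVec, hV, one_mulVec, dotProduct_comm]

lemma proj_dot_le {n m : ℕ} (V : Matrix (Fin n) (Fin m) ℝ) (hV : Vᵀ * V = 1) (x : Fin n → ℝ) :
    (Vᵀ *ᵥ x) ⬝ᵥ (Vᵀ *ᵥ x) ≤ x ⬝ᵥ x := by
  set y := Vᵀ *ᵥ x with hy
  have c1 : x ⬝ᵥ (V *ᵥ y) = y ⬝ᵥ y := by
    rw [dotProduct_mulVec, ← mulVec_transpose, ← hy]
  have c2 : (V *ᵥ y) ⬝ᵥ (V *ᵥ y) = y ⬝ᵥ y := iso_dot V hV y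
  have c3 : (V *ᵥ y) ⬝ᵥ x = y ⬝ᵥ y := by rw [dotProduct_comm]; exact c1
  have key : 0 ≤ (x - V *ᵥ y) ⬝ᵥ (x - V *ᵥ y) :=
    Finset.sum_nonneg fun j _ => mul_self_nonneg _
  rw [sub_dotProduct, dotProduct_sub, dotProduct_sub, c1, c2, c3] at key
  linarith

lemma sv_conj_le {n m : ℕ} (hn : 0 < n) (hm : 0 < m)
    (V : Matrix (Fin n) (Fin m) ℝ) (hV : Vᵀ * V = 1) (X : Matrix (Fin m) (Fin m) ℝ) :
    sv (V * X * Vᵀ) 1 ≤ sv X 1 := by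
  apply R2 hn _ _ (sv_nonneg' X 1)
  intro x
  have hMx : (V * X * Vᵀ) *ᵥ x = V *ᵥ (X *ᵥ (Vᵀ *ᵥ x)) := by
    rw [← mulVec_mulVec, ← mulVec_mulVec]
  rw [hMx, iso_dot V hV]
  calc (X *ᵥ (Vᵀ *ᵥ x)) ⬝ᵥ (X *ᵥ (Vᵀ *ᵥ x)) ≤ (sv X 1) ^ 2 * ((Vᵀ *ᵥ x) ⬝ᵥ (Vᵀ *ᵥ x)) :=
        R1 hm X _
  _ ≤ (sv X 1) ^ 2 * (x ⬝ᵥ x) :=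
        mul_le_mul_of_nonneg_left (proj_dot_le V hV x) (sq_nonneg _)

lemma sv_one_pos {m : ℕ} (hm : 0 < m) (A : Matrix (Fin m) (Fin m) ℝ) (hA : A ≠ 0) :
    0 < sv A 1 := by
  rcases lt_or_eq_of_le (sv_nonneg' A 1) with h | h
  · exact h
  exfalso
  apply hA
  ext i j
  have h1 := R1 hm A (Pi.single j 1)
  rw [← h, zero_pow (by norm_num), zero_mul] at h1
  have h2 : A *ᵥ Pi.single j 1 = 0 :=
    dotProduct_self_eq_zero.mp (le_antisymm h1
      (Finset.sum_nonneg fun k _ => mul_self_nonneg _))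
  have := congrFun h2 i
  simpa [Matrix.mulVec_single] using this

lemma sv_zero {m : ℕ} (hm : 0 < m) : sv (0 : Matrix (Fin m) (Fin m) ℝ) 1 = 0 := by
  refine le_antisymm (R2 hm _ 0 le_rfl fun x => ?_) (sv_nonneg' _ 1)
  simp

/-- With `V` an isometry onto `ker Ωh`, `E(X) = diag(V X Vᵀ)` surjective,
`G = E†` its Moore–Penrose pseudoinverse (a right inverse of `E` whose values are
symmetric and orthogonal to `ker E` in the Frobenius inner product) and
`φ(Ωh) = inf ‖Δ‖_F / ‖E†(Δ)‖` over nonzero `Δ ∈ D_+^n`, every `Δ ∈ D_+^n` with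
`‖Δ‖_F < φ(Ωh) σ_r(Ωh)` belongs to `D_Ωh`. -/
theorem stmt7 {n r : ℕ} (hrn : r < n)
    (Ωh : Matrix (Fin n) (Fin n) ℝ) (hΩ : Ωh.PosSemidef) (hrank : Ωh.rank = r)
    (V : Matrix (Fin n) (Fin (n - r)) ℝ)
    (hViso : Vᵀ * V = 1)
    (hVrange : LinearMap.range V.mulVecLin = LinearMap.ker Ωh.mulVecLin)
    -- the operator `E(X) = diag(V X Vᵀ)` is surjective onto diagonal matrices:
    (hsurj : ∀ D : Matrix (Fin n) (Fin n) ℝ, D.IsDiag →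
      ∃ X : Matrix (Fin (n - r)) (Fin (n - r)) ℝ, X.IsSymm ∧
        Matrix.diagonal (V * X * Vᵀ).diag = D)
    -- `G` is the Moore–Penrose pseudoinverse `E†` of `E`:
    (G : Matrix (Fin n) (Fin n) ℝ →ₗ[ℝ] Matrix (Fin (n - r)) (Fin (n - r)) ℝ)
    (hGsymm : ∀ D : Matrix (Fin n) (Fin n) ℝ, D.IsDiag → (G D).IsSymm)
    (hGrinv : ∀ D : Matrix (Fin n) (Fin n) ℝ, D.IsDiag →
      Matrix.diagonal (V * G D * Vᵀ).diag = D)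
    (hGorth : ∀ D : Matrix (Fin n) (Fin n) ℝ, D.IsDiag →
      ∀ X : Matrix (Fin (n - r)) (Fin (n - r)) ℝ, X.IsSymm →
        Matrix.diagonal (V * X * Vᵀ).diag = 0 → minner (G D) X = 0)
    (φ : ℝ)
    (hφ : φ = sInf {t : ℝ | ∃ Δ : Matrix (Fin n) (Fin n) ℝ, Δ.IsDiag ∧
      (∀ i, 0 ≤ Δ i i) ∧ Δ ≠ 0 ∧ t = frobNorm Δ / opNorm (G Δ)}) :
    ∀ Δ : Matrix (Fin n) (Fin n) ℝ, Δ.IsDiag → (∀ i, 0 ≤ Δ i i) →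
      frobNorm Δ < φ * sv Ωh r →
      ∃ Λ : Matrix (Fin n) (Fin n) ℝ, Λ.IsSymm ∧ (∀ i, Λ i i = 0) ∧
        opNorm (Δ + Λ) < sv Ωh r ∧ rangesOrth (Δ + Λ) Ωh := by
  intro Δ hdiag hnonneg hlt
  have hn : 0 < n := lt_of_le_of_lt (Nat.zero_le r) hrn
  have hm : 0 < n - r := Nat.sub_pos_of_lt hrn
  have hσ0 : 0 ≤ sv Ωh r := sv_nonneg' Ωh r
  have hF0 : 0 ≤ frobNorm Δ := Real.sqrt_nonneg _
  have hφσ : 0 < φ * sv Ωh r := lt_of_le_of_lt hF0 hlt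
  have hφ0 : 0 ≤ φ := by
    rw [hφ]
    apply Real.sInf_nonneg
    rintro t ⟨Δ', -, -, -, rfl⟩
    exact div_nonneg (Real.sqrt_nonneg _) (sv_nonneg' _ 1)
  have hφpos : 0 < φ := by
    rcases lt_or_eq_of_le hφ0 with h | h
    · exact h
    · rw [← h, zero_mul] at hφσ; exact absurd hφσ (lt_irrefl 0)
  have hσpos : 0 < sv Ωh r := by
    by_contra h
    push_neg at h
    rw [le_antisymm h hσ0, mul_zero] at hφσ
    exact absurd hφσ (lt_irrefl 0)
  set X := G Δ with hX
  have hXsymm : X.IsSymm := hGsymm Δ hdiag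
  have hXdiag : Matrix.diagonal (V * X * Vᵀ).diag = Δ := hGrinv Δ hdiag
  set M := V * X * Vᵀ with hM
  -- key norm bound: sv X 1 < sv Ωh r
  have hXlt : sv X 1 < sv Ωh r := by
    by_cases hΔ0 : Δ = 0
    · rw [hX, hΔ0, map_zero, sv_zero hm]
      exact hσpos
    · have hXne : X ≠ 0 := by
        intro h0
        apply hΔ0
        rw [← hXdiag, hM, h0]
        ext i j
        simp [Matrix.diagonal_apply]
      have hN : 0 < sv X 1 := sv_one_pos hm X hXne
      have hbdd : BddBelow {t : ℝ | ∃ Δ : Matrix (Fin n) (Fin n) ℝ, Δ.IsDiag ∧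
          (∀ i, 0 ≤ Δ i i) ∧ Δ ≠ 0 ∧ t = frobNorm Δ / opNorm (G Δ)} := by
        refine ⟨0, ?_⟩
        rintro t ⟨Δ', -, -, -, rfl⟩
        exact div_nonneg (Real.sqrt_nonneg _) (sv_nonneg' _ 1)
      have hmem : frobNorm Δ / opNorm (G Δ) ∈ {t : ℝ | ∃ Δ : Matrix (Fin n) (Fin n) ℝ,
          Δ.IsDiag ∧ (∀ i, 0 ≤ Δ i i) ∧ Δ ≠ 0 ∧ t = frobNorm Δ / opNorm (G Δ)} :=
        ⟨Δ, hdiag, hnonneg, hΔ0, rfl⟩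
      have hφle : φ ≤ frobNorm Δ / opNorm (G Δ) := by
        rw [hφ]; exact csInf_le hbdd hmem
      have hop : opNorm (G Δ) = sv X 1 := rfl
      rw [hop] at hφle
      have h3 : φ * sv X 1 ≤ frobNorm Δ := (le_div_iff₀ hN).mp hφle
      have h4 : φ * sv X 1 < φ * sv Ωh r := lt_of_le_of_lt h3 hlt
      exact lt_of_mul_lt_mul_left h4 hφ0
  have hMlt : sv M 1 < sv Ωh r := lt_of_le_of_lt (sv_conj_le hn hm V hViso X) hXlt
  have hMsymm : Mᵀ = M := by
    rw [hM, transpose_mul, transpose_mul, transpose_transpose, hXsymm.eq, Matrix.mul_assoc]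
  have hMdiag : ∀ i, M i i = Δ i i := by
    intro i
    have := congrFun (congrFun hXdiag i) i
    rwa [Matrix.diagonal_apply_eq] at this
  refine ⟨M - Δ, ?_, ?_, ?_, ?_⟩
  · show (M - Δ)ᵀ = M - Δ
    rw [transpose_sub, hMsymm, hdiag.isSymm.eq]
  · intro i
    simp [hMdiag i]
  · have hd : Δ + (M - Δ) = M := by abel
    rw [hd]
    exact hMlt
  · have hd : Δ + (M - Δ) = M := by abel
    rw [hd]
    intro x y
    have hmem2 : M *ᵥ x ∈ LinearMap.range V.mulVecLin := by
      refine ⟨(X * Vᵀ) *ᵥ x, ?_⟩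
      rw [Matrix.mulVecLin_apply, mulVec_mulVec, ← Matrix.mul_assoc]
    rw [hVrange] at hmem2
    have hker : Ωh *ᵥ (M *ᵥ x) = 0 := hmem2
    have hsym : Ωhᵀ = Ωh := by
      have h := hΩ.isHermitian
      rwa [Matrix.IsHermitian, Matrix.conjTranspose_eq_transpose_of_trivial] at h
    calc (M *ᵥ x) ⬝ᵥ (Ωh *ᵥ y) = ((M *ᵥ x) ᵥ* Ωh) ⬝ᵥ y := dotProduct_mulVec _ _ _
    _ = (Ωhᵀ *ᵥ (M *ᵥ x)) ⬝ᵥ y := by rw [mulVec_transpose]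
    _ = 0 := by rw [hsym, hker, zero_dotProduct]
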